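/- For positive reals x_1,...,x_n in (0,1/2] with positive weights summing to 1, the Ky Fan inequality holds: A'_n/G'_n ≤ A_n/G_n, where A, G denote the weighted arithmetic and geometric means and primes denote the means of 1 - x_i. Moreover equality holds if and only if x_1 = ... = x_n. -/

import Mathlib

open Real Finset

noncomputable def kyFanG : ℝ → ℝ := fun t => Real.log (1 - t) - Real.log t

lemma kyFanG_hasDerivAt {t : ℝ} (h0 : 0 < t) (h1 : t < 1) :
    HasDerivAt kyFanG (-(1 - t)⁻¹ - t⁻¹) t := by
  have h1' : (1 : ℝ) - t ≠ 0 := by linarith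
  have hlog1 : HasDerivAt (fun t : ℝ => Real.log (1 - t)) ((1 - t)⁻¹ * (-1)) t := by
    have := (Real.hasDerivAt_log h1').comp t ((hasDerivAt_const t (1:ℝ)).sub (hasDerivAt_id t))
    exact this.congr_deriv (by ring)
  have hlog2 : HasDerivAt Real.log t⁻¹ t := Real.hasDerivAt_log h0.ne'
  have := hlog1.sub hlog2
  refine this.congr_deriv ?_
  ring

lemma kyFanG_strictConvexOn : StrictConvexOn ℝ (Set.Ioc (0:ℝ) (1/2)) kyFanG := by
  apply strictConvexOn_of_deriv2_pos (convex_Ioc _ _)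
  · intro t ht
    have h0 : (0:ℝ) < t := ht.1
    have h1 : t < 1 := by have := ht.2; linarith
    exact ((kyFanG_hasDerivAt h0 h1).continuousAt).continuousWithinAt
  · intro t ht
    rw [interior_Ioc] at ht
    obtain ⟨h0, h2⟩ := ht
    have h1 : t < 1 := by linarith
    -- deriv g = fun t => -(1-t)⁻¹ - t⁻¹ near t
    have heq : Set.EqOn (deriv kyFanG) (fun s => -(1 - s)⁻¹ - s⁻¹) (Set.Ioo (0:ℝ) 1) := by
      intro s hs
      exact (kyFanG_hasDerivAt hs.1 hs.2).deriv
    have hmem : Set.Ioo (0:ℝ) 1 ∈ nhds t := (isOpen_Ioo).mem_nhds ⟨h0, h1⟩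
    have hEv : deriv kyFanG =ᶠ[nhds t] (fun s => -(1 - s)⁻¹ - s⁻¹) :=
      Filter.eventuallyEq_of_mem hmem heq
    have h1' : (1:ℝ) - t ≠ 0 := by linarith
    have hd2 : HasDerivAt (fun s : ℝ => -(1 - s)⁻¹ - s⁻¹) ((t⁻¹)^2 - ((1-t)⁻¹)^2) t := by
      have hinv1 : HasDerivAt (fun s : ℝ => (1 - s)⁻¹) (-(0-1) / (1 - t)^2) t := by
        exact ((hasDerivAt_const t (1:ℝ)).sub (hasDerivAt_id t)).inv h1'
      have hinv2 : HasDerivAt (fun s : ℝ => s⁻¹) (-(1:ℝ) / t^2) t := by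
        exact (hasDerivAt_id t).inv h0.ne'
      have := (hinv1.neg).sub hinv2
      refine this.congr_deriv ?_
      field_simp
      ring
    have : deriv^[2] kyFanG t = (t⁻¹)^2 - ((1-t)⁻¹)^2 := by
      have : deriv (deriv kyFanG) t = deriv (fun s : ℝ => -(1 - s)⁻¹ - s⁻¹) t :=
        hEv.deriv_eq
      simp only [Function.iterate_succ, Function.iterate_zero, Function.comp_apply, id]
      rw [this, hd2.deriv]
    rw [this]
    have ht1 : t < 1 - t := by linarith
    have : (1 - t)⁻¹ < t⁻¹ := by
      rw [inv_lt_inv₀ (by linarith) h0]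
      exact ht1
    have h0' : 0 < (1 - t)⁻¹ := by
      have : (0:ℝ) < 1 - t := by linarith
      positivity
    nlinarith

/-- The Ky Fan inequality `A'_n/G'_n ≤ A_n/G_n`, with equality iff all `x i` are equal. -/
theorem kyFan_inequality (n : ℕ) (x μ : Fin n → ℝ)
    (hx : ∀ i, x i ∈ Set.Ioc (0:ℝ) (1/2)) (hμ : ∀ i, 0 < μ i)
    (hsum : ∑ i, μ i = 1)
    (A G A' G' : ℝ)
    (hA : A = ∑ i, μ i * x i) (hG : G = ∏ i, x i ^ μ i)
    (hA' : A' = ∑ i, μ i * (1 - x i)) (hG' : G' = ∏ i, (1 - x i) ^ μ i) :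
    A' / G' ≤ A / G ∧ (A' / G' = A / G ↔ ∀ i j, x i = x j) := by
  have hn : n ≠ 0 := by rintro rfl; simp at hsum
  haveI : Nonempty (Fin n) := ⟨⟨0, Nat.pos_of_ne_zero hn⟩⟩
  have hxpos : ∀ i, 0 < x i := fun i => (hx i).1
  have hxle : ∀ i, x i ≤ 1/2 := fun i => (hx i).2
  have h1x : ∀ i, 0 < 1 - x i := fun i => by have := hxle i; linarith
  have hApos : 0 < A := by
    rw [hA]
    exact Finset.sum_pos (fun i _ => mul_pos (hμ i) (hxpos i)) Finset.univ_nonempty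
  have hAle : A ≤ 1/2 := by
    rw [hA]
    calc ∑ i, μ i * x i ≤ ∑ i, μ i * (1/2) :=
          Finset.sum_le_sum fun i _ => mul_le_mul_of_nonneg_left (hxle i) (hμ i).le
      _ = 1/2 := by rw [← Finset.sum_mul, hsum, one_mul]
  have hA'eq : A' = 1 - A := by
    rw [hA', hA]
    simp [mul_sub, Finset.sum_sub_distrib, hsum]
  have hA'pos : 0 < A' := by rw [hA'eq]; linarith
  have hGpos : 0 < G := by
    rw [hG]; exact Finset.prod_pos fun i _ => Real.rpow_pos_of_pos (hxpos i) _
  have hG'pos : 0 < G' := by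
    rw [hG']; exact Finset.prod_pos fun i _ => Real.rpow_pos_of_pos (h1x i) _
  have hlogG : Real.log G = ∑ i, μ i * Real.log (x i) := by
    rw [hG, Real.log_prod (fun i _ => (Real.rpow_pos_of_pos (hxpos i) _).ne')]
    exact Finset.sum_congr rfl fun i _ => Real.log_rpow (hxpos i) _
  have hlogG' : Real.log G' = ∑ i, μ i * Real.log (1 - x i) := by
    rw [hG', Real.log_prod (fun i _ => (Real.rpow_pos_of_pos (h1x i) _).ne')]
    exact Finset.sum_congr rfl fun i _ => Real.log_rpow (h1x i) _
  have hsumg : ∑ i, μ i * kyFanG (x i) = Real.log G' - Real.log G := by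
    rw [hlogG, hlogG']
    simp only [kyFanG, mul_sub]
    rw [Finset.sum_sub_distrib]
  have hAsum : (∑ i, μ i • x i) = A := by rw [hA]; simp [smul_eq_mul]
  have hgA : kyFanG A = Real.log A' - Real.log A := by
    rw [kyFanG, hA'eq]
  -- weak Jensen
  have hjen : kyFanG A ≤ ∑ i, μ i * kyFanG (x i) := by
    have := kyFanG_strictConvexOn.convexOn.map_sum_le
      (t := Finset.univ) (w := μ) (p := x)
      (fun i _ => (hμ i).le) hsum (fun i _ => hx i)
    simp only [smul_eq_mul] at this; rwa [← hA] at this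
  have hkey : Real.log (A' / G') ≤ Real.log (A / G) := by
    rw [Real.log_div hA'pos.ne' hG'pos.ne', Real.log_div hApos.ne' hGpos.ne']
    rw [hgA, hsumg] at hjen
    linarith
  have hmain : A' / G' ≤ A / G :=
    (Real.log_le_log_iff (by positivity) (by positivity)).mp hkey
  refine ⟨hmain, ?_, ?_⟩
  · intro heq
    by_contra hne
    push_neg at hne
    obtain ⟨i, j, hij⟩ := hne
    have hlt : kyFanG A < ∑ i, μ i * kyFanG (x i) := by
      have := kyFanG_strictConvexOn.map_sum_lt
        (t := Finset.univ) (w := μ) (p := x)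
        (fun i _ => hμ i) hsum (fun i _ => hx i)
        ⟨i, Finset.mem_univ i, j, Finset.mem_univ j, hij⟩
      simp only [smul_eq_mul] at this; rwa [← hA] at this
    have hklt : Real.log (A' / G') < Real.log (A / G) := by
      rw [Real.log_div hA'pos.ne' hG'pos.ne', Real.log_div hApos.ne' hGpos.ne']
      rw [hgA, hsumg] at hlt
      linarith
    have : A' / G' < A / G :=
      (Real.log_lt_log_iff (by positivity) (by positivity)).mp hklt
    rw [heq] at this
    exact lt_irrefl _ this
  · intro hall
    obtain ⟨i0⟩ := (inferInstance : Nonempty (Fin n))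
    have hAeq : A = x i0 := by
      rw [hA]
      rw [Finset.sum_congr rfl (fun i _ => by rw [hall i i0])]
      rw [← Finset.sum_mul, hsum, one_mul]
    have hGeq : G = x i0 := by
      have : Real.log G = Real.log (x i0) := by
        rw [hlogG, Finset.sum_congr rfl (fun i _ => by rw [hall i i0]),
          ← Finset.sum_mul, hsum, one_mul]
      calc G = Real.exp (Real.log G) := (Real.exp_log hGpos).symm
        _ = Real.exp (Real.log (x i0)) := by rw [this]
        _ = x i0 := Real.exp_log (hxpos i0)
    have hA'eq2 : A' = 1 - x i0 := by rw [hA'eq, hAeq]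
    have hG'eq : G' = 1 - x i0 := by
      have : Real.log G' = Real.log (1 - x i0) := by
        rw [hlogG', Finset.sum_congr rfl (fun i _ => by rw [hall i i0]),
          ← Finset.sum_mul, hsum, one_mul]
      calc G' = Real.exp (Real.log G') := (Real.exp_log hG'pos).symm
        _ = Real.exp (Real.log (1 - x i0)) := by rw [this]
        _ = 1 - x i0 := Real.exp_log (h1x i0)
    rw [hAeq, hGeq, hA'eq2, hG'eq, div_self (hxpos i0).ne', div_self (h1x i0).ne']
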